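/- arXiv:2207.12457 — 5 statements merged into one kernel-verified Lean document; each statement's English description precedes it below -/
import Mathlib

section
/- (Positivity of ρ̃, Lemma 2(i).) Let 1/2 ≤ p ≤ 1, let p₊, p₋ ≥ 0 with p₊ + p₋ = 1, let v₊, v₋ be unit vectors in ℝ³, let z = (0,0,1), and assume p₊·v₊ + p₋·v₋ = (2p−1)·z. Then for every unit vector λ in ℝ³, ρ̃(λ) := (1/π)[ p₊·Θ(λ·v₊) + p₋·Θ(λ·v₋) − (2p−1)·Θ(λ·z) ] ≥ 0. -/
open MeasureTheory
open scoped RealInnerProductSpace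

/-- `Θ(z) = z` for `z ≥ 0` and `0` otherwise. -/
noncomputable def Theta (z : ℝ) : ℝ := if 0 ≤ z then z else 0

/-- The vector `z = (0,0,1)` in `ℝ³`. -/
noncomputable def zvec : EuclideanSpace ℝ (Fin 3) := EuclideanSpace.single 2 (1 : ℝ)

lemma Theta_nonneg (x : ℝ) : 0 ≤ Theta x := by
  unfold Theta; split <;> simp_all

lemma le_Theta (x : ℝ) : x ≤ Theta x := by
  unfold Theta; split <;> simp_all; linarith

/-- Lemma 2(i): positivity of `ρ̃`. -/
theorem rhoTilde_nonneg
    (p pP pM : ℝ) (hp : 1 / 2 ≤ p) (hp' : p ≤ 1)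
    (hpP : 0 ≤ pP) (hpM : 0 ≤ pM) (hsum : pP + pM = 1)
    (vP vM : EuclideanSpace ℝ (Fin 3)) (hvP : ‖vP‖ = 1) (hvM : ‖vM‖ = 1)
    (hcombo : pP • vP + pM • vM = (2 * p - 1) • zvec)
    (lam : EuclideanSpace ℝ (Fin 3)) (hlam : ‖lam‖ = 1) :
    0 ≤ (1 / Real.pi) *
      (pP * Theta ⟪lam, vP⟫ + pM * Theta ⟪lam, vM⟫ - (2 * p - 1) * Theta ⟪lam, zvec⟫) := by
  have hkey : pP * ⟪lam, vP⟫ + pM * ⟪lam, vM⟫ = (2 * p - 1) * ⟪lam, zvec⟫ := by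
    have h := congrArg (fun w => ⟪lam, w⟫) hcombo
    simp only [inner_add_right, real_inner_smul_right] at h
    exact h
  have h2p : 0 ≤ 2 * p - 1 := by linarith
  have hS : (2 * p - 1) * Theta ⟪lam, zvec⟫ ≤
      pP * Theta ⟪lam, vP⟫ + pM * Theta ⟪lam, vM⟫ := by
    by_cases hc : 0 ≤ ⟪lam, zvec⟫
    · have : Theta ⟪lam, zvec⟫ = ⟪lam, zvec⟫ := if_pos hc
      rw [this]
      have h1 := le_Theta ⟪lam, vP⟫
      have h2 := le_Theta ⟪lam, vM⟫
      nlinarith [mul_le_mul_of_nonneg_left h1 hpP, mul_le_mul_of_nonneg_left h2 hpM]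
    · have : Theta ⟪lam, zvec⟫ = 0 := if_neg hc
      rw [this]
      have := Theta_nonneg ⟪lam, vP⟫
      have := Theta_nonneg ⟪lam, vM⟫
      nlinarith
  have hπ : 0 ≤ 1 / Real.pi := by positivity
  nlinarith
end

section
/- (Symmetry of ρ̃, Lemma 2(ii).) Let 1/2 ≤ p ≤ 1, let p₊, p₋ ≥ 0 with p₊ + p₋ = 1, let v₊, v₋ be unit vectors in ℝ³, let z = (0,0,1), and assume p₊·v₊ + p₋·v₋ = (2p−1)·z. Then for every unit vector λ in ℝ³, ρ̃(λ) = ρ̃(−λ), where ρ̃(λ) := (1/π)[ p₊·Θ(λ·v₊) + p₋·Θ(λ·v₋) − (2p−1)·Θ(λ·z) ]. -/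
open MeasureTheory
open scoped RealInnerProductSpace

/-- The extra density `ρ̃(λ)`. -/
noncomputable def rhoTilde (p pP pM : ℝ) (vP vM lam : EuclideanSpace ℝ (Fin 3)) : ℝ :=
  (1 / Real.pi) *
    (pP * Theta ⟪lam, vP⟫ + pM * Theta ⟪lam, vM⟫ - (2 * p - 1) * Theta ⟪lam, zvec⟫)

/-- Lemma 2(ii): symmetry of `ρ̃`, namely `ρ̃(λ) = ρ̃(−λ)`. -/
theorem rhoTilde_symmetric
    (p pP pM : ℝ) (hp : 1 / 2 ≤ p) (hp' : p ≤ 1)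
    (hpP : 0 ≤ pP) (hpM : 0 ≤ pM) (hsum : pP + pM = 1)
    (vP vM : EuclideanSpace ℝ (Fin 3)) (hvP : ‖vP‖ = 1) (hvM : ‖vM‖ = 1)
    (hcombo : pP • vP + pM • vM = (2 * p - 1) • zvec)
    (lam : EuclideanSpace ℝ (Fin 3)) (hlam : ‖lam‖ = 1) :
    rhoTilde p pP pM vP vM lam = rhoTilde p pP pM vP vM (-lam) := by
  have key : ∀ x : ℝ, Theta x - Theta (-x) = x := by
    intro x
    unfold Theta
    rcases le_or_gt 0 x with h | h
    · rcases eq_or_lt_of_le h with h0 | h0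
      · simp [← h0]
      · rw [if_pos h, if_neg (by linarith)]; ring
    · rw [if_neg (not_le.mpr h), if_pos (by linarith)]; ring
  have hc : pP * ⟪lam, vP⟫ + pM * ⟪lam, vM⟫ = (2 * p - 1) * ⟪lam, zvec⟫ := by
    have := congrArg (fun w => ⟪lam, w⟫) hcombo
    simpa [inner_add_right, inner_smul_right] using this
  unfold rhoTilde
  simp only [inner_neg_left]
  congr 1
  linear_combination pP * key ⟪lam, vP⟫ + pM * key ⟪lam, vM⟫ -
    (2 * p - 1) * key ⟪lam, zvec⟫ + hc
end

section
/- (First bound on ρ̃, Lemma 2(iv).) Let 1/2 ≤ p ≤ 1, let p₊, p₋ ≥ 0 with p₊ + p₋ = 1, let v₊, v₋ be unit vectors in ℝ³, let z = (0,0,1), and assume p₊·v₊ + p₋·v₋ = (2p−1)·z. Then for every unit vector λ in ℝ³, ρ̃(λ) ≤ (p₊/π)·|λ·v₊| and ρ̃(λ) ≤ (p₋/π)·|λ·v₋|, where ρ̃(λ) := (1/π)[ p₊·Θ(λ·v₊) + p₋·Θ(λ·v₋) − (2p−1)·Θ(λ·z) ]. -/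
open MeasureTheory
open scoped RealInnerProductSpace

lemma theta_eq (x : ℝ) : Theta x = (x + |x|) / 2 := by
  unfold Theta
  rcases le_or_gt 0 x with h | h
  · rw [if_pos h, abs_of_nonneg h]; ring
  · rw [if_neg (not_le.mpr h), abs_of_neg h]; ring

/-- Lemma 2(iv): first bound on `ρ̃`, namely `ρ̃(λ) ≤ (p₊/π)·|λ·v₊|` and
`ρ̃(λ) ≤ (p₋/π)·|λ·v₋|`. -/
theorem rhoTilde_first_bound
    (p pP pM : ℝ) (hp : 1 / 2 ≤ p) (hp' : p ≤ 1)
    (hpP : 0 ≤ pP) (hpM : 0 ≤ pM) (hsum : pP + pM = 1)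
    (vP vM : EuclideanSpace ℝ (Fin 3)) (hvP : ‖vP‖ = 1) (hvM : ‖vM‖ = 1)
    (hcombo : pP • vP + pM • vM = (2 * p - 1) • zvec)
    (lam : EuclideanSpace ℝ (Fin 3)) (hlam : ‖lam‖ = 1) :
    rhoTilde p pP pM vP vM lam ≤ (pP / Real.pi) * |⟪lam, vP⟫| ∧
    rhoTilde p pP pM vP vM lam ≤ (pM / Real.pi) * |⟪lam, vM⟫| := by
  have hπ : (0:ℝ) < Real.pi := Real.pi_pos
  set a := ⟪lam, vP⟫ with ha
  set b := ⟪lam, vM⟫ with hb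
  set c := ⟪lam, zvec⟫ with hc
  have hlin : pP * a + pM * b = (2 * p - 1) * c := by
    have h := congrArg (fun w => ⟪lam, w⟫) hcombo
    simp only [inner_add_right, real_inner_smul_right] at h
    exact h
  have h2p : 0 ≤ 2 * p - 1 := by linarith
  have habs : (2 * p - 1) * |c| = |pP * a + pM * b| := by
    rw [hlin, abs_mul, abs_of_nonneg h2p]
  have haP : |pP * a| = pP * |a| := by rw [abs_mul, abs_of_nonneg hpP]
  have haM : |pM * b| = pM * |b| := by rw [abs_mul, abs_of_nonneg hpM]
  have hE : rhoTilde p pP pM vP vM lam =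
      (1 / Real.pi) * ((pP * |a| + pM * |b| - (2 * p - 1) * |c|) / 2) := by
    unfold rhoTilde
    rw [theta_eq, theta_eq, theta_eq, ← ha, ← hb, ← hc]
    rw [show pP * ((a + |a|) / 2) + pM * ((b + |b|) / 2) - (2 * p - 1) * ((c + |c|) / 2)
        = ((pP * a + pM * b - (2 * p - 1) * c) + (pP * |a| + pM * |b| - (2 * p - 1) * |c|)) / 2
        by ring, hlin]
    ring
  have key : ∀ x y : ℝ, |x| - |y| ≤ |x + y| := by
    intro x y
    have := abs_sub_abs_le_abs_sub x (-y)
    simpa [sub_neg_eq_add] using this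
  constructor
  · have h1 : pM * |b| - pP * |a| ≤ |pP * a + pM * b| := by
      have := key (pM * b) (pP * a)
      rw [haM, haP, add_comm] at this; linarith
    rw [hE, show pP / Real.pi * |a| = 1 / Real.pi * ((2 * (pP * |a|)) / 2) by ring]
    apply mul_le_mul_of_nonneg_left _ (by positivity)
    rw [← habs] at h1
    linarith
  · have h1 : pP * |a| - pM * |b| ≤ |pP * a + pM * b| := by
      have := key (pP * a) (pM * b)
      rw [haM, haP] at this; linarith
    rw [hE, show pM / Real.pi * |b| = 1 / Real.pi * ((2 * (pM * |b|)) / 2) by ring]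
    apply mul_le_mul_of_nonneg_left _ (by positivity)
    rw [← habs] at h1
    linarith
end

section
/- (Third bound on ρ̃, Lemma 2(vi).) Let 1/2 ≤ p ≤ 1, let p₊, p₋ ≥ 0 with p₊ + p₋ = 1, let v₊, v₋ be unit vectors in ℝ³, let z = (0,0,1), and assume p₊·v₊ + p₋·v₋ = (2p−1)·z. Then for every unit vector λ in ℝ³, ρ̃(λ) ≤ √(p(1−p))/π, where ρ̃(λ) := (1/π)[ p₊·Θ(λ·v₊) + p₋·Θ(λ·v₋) − (2p−1)·Θ(λ·z) ]. -/
open MeasureTheory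
open scoped RealInnerProductSpace

lemma key_inner {E : Type*} [NormedAddCommGroup E] [InnerProductSpace ℝ E]
    (lam X Y : E) (hlam : ‖lam‖ = 1) :
    -(⟪lam, X⟫ * ⟪lam, Y⟫) ≤ (‖X‖ * ‖Y‖ - ⟪X, Y⟫) / 2 := by
  have hself : ⟪lam, lam⟫ = (1 : ℝ) := by
    rw [real_inner_self_eq_norm_sq, hlam]; norm_num
  have hXsq : ‖X - ⟪lam, X⟫ • lam‖ ^ 2 = ‖X‖ ^ 2 - ⟪lam, X⟫ ^ 2 := by
    rw [norm_sub_sq_real, real_inner_smul_right, norm_smul, hlam, Real.norm_eq_abs,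
      real_inner_comm X lam]
    rw [mul_one, sq_abs]; ring
  have hYsq : ‖Y - ⟪lam, Y⟫ • lam‖ ^ 2 = ‖Y‖ ^ 2 - ⟪lam, Y⟫ ^ 2 := by
    rw [norm_sub_sq_real, real_inner_smul_right, norm_smul, hlam, Real.norm_eq_abs,
      real_inner_comm Y lam]
    rw [mul_one, sq_abs]; ring
  have hinner : ⟪X - ⟪lam, X⟫ • lam, Y - ⟪lam, Y⟫ • lam⟫ = ⟪X, Y⟫ - ⟪lam, X⟫ * ⟪lam, Y⟫ := by
    rw [inner_sub_left, inner_sub_right, inner_sub_right, real_inner_smul_left,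
      real_inner_smul_left, real_inner_smul_right, real_inner_smul_right, hself,
      real_inner_comm X lam]
    ring
  have hCS : ⟪X - ⟪lam, X⟫ • lam, Y - ⟪lam, Y⟫ • lam⟫ ≤
      ‖X - ⟪lam, X⟫ • lam‖ * ‖Y - ⟪lam, Y⟫ • lam‖ := real_inner_le_norm _ _
  set A := ‖X - ⟪lam, X⟫ • lam‖ with hA
  set B := ‖Y - ⟪lam, Y⟫ • lam‖ with hB
  have h1 : 0 ≤ A := norm_nonneg _
  have h2 : 0 ≤ B := norm_nonneg _
  have h3 : 0 ≤ ‖X‖ := norm_nonneg _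
  have h4 : 0 ≤ ‖Y‖ := norm_nonneg _
  have h5 : 0 ≤ |⟪lam, X⟫| := abs_nonneg _
  have h6 : 0 ≤ |⟪lam, Y⟫| := abs_nonneg _
  have hsq : (A * B + |⟪lam, X⟫| * |⟪lam, Y⟫|) ^ 2 ≤ (‖X‖ * ‖Y‖) ^ 2 := by
    nlinarith [sq_nonneg (A * |⟪lam, Y⟫| - B * |⟪lam, X⟫|), sq_abs ⟪lam, X⟫,
      sq_abs ⟪lam, Y⟫, mul_nonneg h1 h2, mul_nonneg h5 h6]
  have hprod : A * B + |⟪lam, X⟫| * |⟪lam, Y⟫| ≤ ‖X‖ * ‖Y‖ := by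
    have := Real.sqrt_le_sqrt hsq
    rwa [Real.sqrt_sq (by positivity), Real.sqrt_sq (by positivity)] at this
  have habs : -(⟪lam, X⟫ * ⟪lam, Y⟫) ≤ |⟪lam, X⟫| * |⟪lam, Y⟫| := by
    rw [← abs_mul]; exact neg_le_of_neg_le (neg_abs_le _)
  nlinarith [hCS, hinner, hprod, habs]

lemma theta_mul (k z : ℝ) (hk : 0 ≤ k) : k * Theta z = Theta (k * z) := by
  unfold Theta
  rcases le_or_gt 0 z with h | h
  · rw [if_pos h, if_pos (mul_nonneg hk h)]
  · rw [if_neg (not_le.mpr h)]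
    rcases eq_or_lt_of_le hk with rfl | hk'
    · simp
    · rw [if_neg (not_le.mpr (mul_neg_of_pos_of_neg hk' h)), mul_zero]

lemma theta_ineq (x y K : ℝ) (hK : -(x * y) ≤ K) (hK0 : 0 ≤ K) :
    Theta x + Theta y - Theta (x + y) ≤ Real.sqrt K := by
  have hs0 : 0 ≤ Real.sqrt K := Real.sqrt_nonneg K
  have hs : Real.sqrt K ^ 2 = K := Real.sq_sqrt hK0
  unfold Theta
  split_ifs with h1 h2 h3 h4 h5 h6 h7 <;> nlinarith [sq_nonneg (x + Real.sqrt K),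
    sq_nonneg (y + Real.sqrt K), sq_nonneg (x - Real.sqrt K), sq_nonneg (y - Real.sqrt K)]

/-- Lemma 2(vi): third bound on `ρ̃`, namely `ρ̃(λ) ≤ √(p(1−p))/π`. -/
theorem rhoTilde_third_bound
    (p pP pM : ℝ) (hp : 1 / 2 ≤ p) (hp' : p ≤ 1)
    (hpP : 0 ≤ pP) (hpM : 0 ≤ pM) (hsum : pP + pM = 1)
    (vP vM : EuclideanSpace ℝ (Fin 3)) (hvP : ‖vP‖ = 1) (hvM : ‖vM‖ = 1)
    (hcombo : pP • vP + pM • vM = (2 * p - 1) • zvec)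
    (lam : EuclideanSpace ℝ (Fin 3)) (hlam : ‖lam‖ = 1) :
    rhoTilde p pP pM vP vM lam ≤ Real.sqrt (p * (1 - p)) / Real.pi := by
  have hs0 : (0 : ℝ) ≤ 2 * p - 1 := by linarith
  have hz : ‖zvec‖ = 1 := by
    rw [zvec, EuclideanSpace.norm_single]; norm_num
  have hXn : ‖pP • vP‖ = pP := by
    rw [norm_smul, hvP, Real.norm_eq_abs, abs_of_nonneg hpP, mul_one]
  have hYn : ‖pM • vM‖ = pM := by
    rw [norm_smul, hvM, Real.norm_eq_abs, abs_of_nonneg hpM, mul_one]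
  have hSn : ‖pP • vP + pM • vM‖ = 2 * p - 1 := by
    rw [hcombo, norm_smul, hz, Real.norm_eq_abs, abs_of_nonneg hs0, mul_one]
  have hip : ⟪pP • vP, pM • vM⟫ = ((2 * p - 1) ^ 2 - pP ^ 2 - pM ^ 2) / 2 := by
    have h := norm_add_sq_real (pP • vP) (pM • vM)
    rw [hXn, hYn, hSn] at h
    linarith
  have hkey := key_inner lam (pP • vP) (pM • vM) hlam
  rw [hXn, hYn, hip, real_inner_smul_right, real_inner_smul_right] at hkey
  have hpM' : pM = 1 - pP := by linarith
  have hKb : -(pP * ⟪lam, vP⟫ * (pM * ⟪lam, vM⟫)) ≤ p * (1 - p) := by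
    have heq : (pP * pM - ((2 * p - 1) ^ 2 - pP ^ 2 - pM ^ 2) / 2) / 2 = p * (1 - p) := by
      rw [hpM']; ring
    linarith
  have hK0 : 0 ≤ p * (1 - p) := mul_nonneg (by linarith) (by linarith)
  have hE := theta_ineq (pP * ⟪lam, vP⟫) (pM * ⟪lam, vM⟫) (p * (1 - p)) hKb hK0
  have hc : (2 * p - 1) * ⟪lam, zvec⟫ = pP * ⟪lam, vP⟫ + pM * ⟪lam, vM⟫ := by
    rw [← real_inner_smul_right, ← hcombo, inner_add_right, real_inner_smul_right,
      real_inner_smul_right]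
  have hπ : (0 : ℝ) < Real.pi := Real.pi_pos
  rw [rhoTilde, theta_mul _ _ hpP, theta_mul _ _ hpM, theta_mul _ _ hs0, hc]
  calc (1 / Real.pi) * (Theta (pP * ⟪lam, vP⟫) + Theta (pM * ⟪lam, vM⟫) -
        Theta (pP * ⟪lam, vP⟫ + pM * ⟪lam, vM⟫))
      ≤ (1 / Real.pi) * Real.sqrt (p * (1 - p)) := by
        apply mul_le_mul_of_nonneg_left hE (by positivity)
    _ = Real.sqrt (p * (1 - p)) / Real.pi := by ring
end

section
/- (Validity of the one-bit Protocol 1.) Let p satisfy 1/2 + √3/4 ≤ p ≤ 1, let p₊, p₋ ≥ 0 with p₊ + p₋ = 1, let v₊, v₋ be unit vectors in ℝ³, let z = (0,0,1), and assume p₊·v₊ + p₋·v₋ = (2p−1)·z. Then for every unit vector λ in ℝ³, 0 ≤ ρ̃(λ) ≤ 1/(4π), where ρ̃(λ) := (1/π)[ p₊·Θ(λ·v₊) + p₋·Θ(λ·v₋) − (2p−1)·Θ(λ·z) ]; hence (4π)·ρ̃(λ) is a valid probability in [0,1]. -/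
open MeasureTheory
open scoped RealInnerProductSpace

set_option maxHeartbeats 800000 in
/-- Validity of the one-bit Protocol 1: for `1/2 + √3/4 ≤ p ≤ 1`,
`0 ≤ ρ̃(λ) ≤ 1/(4π)`, so `(4π)·ρ̃(λ)` is a valid probability. -/
theorem one_bit_protocol_valid
    (p pP pM : ℝ) (hp : 1 / 2 + Real.sqrt 3 / 4 ≤ p) (hp' : p ≤ 1)
    (hpP : 0 ≤ pP) (hpM : 0 ≤ pM) (hsum : pP + pM = 1)
    (vP vM : EuclideanSpace ℝ (Fin 3)) (hvP : ‖vP‖ = 1) (hvM : ‖vM‖ = 1)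
    (hcombo : pP • vP + pM • vM = (2 * p - 1) • zvec)
    (lam : EuclideanSpace ℝ (Fin 3)) (hlam : ‖lam‖ = 1) :
    0 ≤ rhoTilde p pP pM vP vM lam ∧ rhoTilde p pP pM vP vM lam ≤ 1 / (4 * Real.pi) := by
  have hπ := Real.pi_pos
  set a := ⟪lam, vP⟫ with ha
  set b := ⟪lam, vM⟫ with hb
  set c := ⟪lam, zvec⟫ with hc
  have hz : ‖zvec‖ = 1 := by
    simp [zvec]
  have hlin : pP * a + pM * b = (2 * p - 1) * c := by
    have h := congrArg (fun v => (⟪lam, v⟫ : ℝ)) hcombo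
    simp only [inner_add_right, real_inner_smul_right] at h
    exact h
  have hs : Real.sqrt 3 / 2 ≤ 2 * p - 1 := by linarith
  have hs0 : (0:ℝ) ≤ 2 * p - 1 := le_trans (by positivity) hs
  have hs2 : (3:ℝ)/4 ≤ (2 * p - 1)^2 := by
    nlinarith [Real.sq_sqrt (by norm_num : (0:ℝ) ≤ 3), Real.sqrt_nonneg 3]
  set t := ⟪vP, vM⟫ with hvt
  have hnorm : pP^2 + 2*pP*pM*t + pM^2 = (2*p-1)^2 := by
    have h1 : ⟪pP • vP + pM • vM, pP • vP + pM • vM⟫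
        = ⟪(2*p-1) • zvec, (2*p-1) • zvec⟫ := by rw [hcombo]
    have h2 : ⟪vP, vP⟫ = 1 := by
      rw [real_inner_self_eq_norm_sq, hvP]; norm_num
    have h3 : ⟪vM, vM⟫ = 1 := by
      rw [real_inner_self_eq_norm_sq, hvM]; norm_num
    have h4 : ⟪zvec, zvec⟫ = 1 := by
      rw [real_inner_self_eq_norm_sq, hz]; norm_num
    have hcomm : (⟪vM, vP⟫ : ℝ) = t := by rw [real_inner_comm, ← hvt]
    simp only [inner_add_left, inner_add_right, real_inner_smul_left,
      real_inner_smul_right, h2, h3, h4, hcomm] at h1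
    linear_combination h1
  have hab2 : (a - b)^2 ≤ 2 - 2*t := by
    have h2 : a - b = ⟪lam, vP - vM⟫ := by rw [inner_sub_right]
    have h3 : |⟪lam, vP - vM⟫| ≤ ‖lam‖ * ‖vP - vM‖ := abs_real_inner_le_norm _ _
    have h4 : ‖vP - vM‖^2 = 2 - 2*t := by
      rw [norm_sub_sq_real, hvP, hvM, ← hvt]; ring
    rw [hlam, one_mul] at h3
    have h6 : (a - b)^2 ≤ ‖vP - vM‖^2 := by
      rw [h2, ← sq_abs]
      exact pow_le_pow_left₀ (abs_nonneg _) h3 2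
    rw [h4] at h6
    exact h6
  -- reduction of rhoTilde
  have h5 : |pP*a + pM*b| = (2*p-1) * |c| := by
    rw [hlin, abs_mul, abs_of_nonneg hs0]
  have hrho : rhoTilde p pP pM vP vM lam
      = (1/(2*Real.pi)) * (pP*|a| + pM*|b| - |pP*a + pM*b|) := by
    unfold rhoTilde
    rw [← ha, ← hb, ← hc, theta_eq, theta_eq, theta_eq]
    linear_combination (1/(2*Real.pi)) * hlin + (1/(2*Real.pi)) * h5
  have htri : |pP*a + pM*b| ≤ pP*|a| + pM*|b| := by
    calc |pP*a + pM*b| ≤ |pP*a| + |pM*b| := abs_add_le _ _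
      _ = pP*|a| + pM*|b| := by
          rw [abs_mul, abs_mul, abs_of_nonneg hpP, abs_of_nonneg hpM]
  have key : pP*|a| + pM*|b| - |pP*a + pM*b| ≤ 1/2 := by
    rcases le_or_gt 0 (a*b) with hsame | hopp
    · -- same signs: equality in triangle inequality
      have habm : |a| * |b| = a * b := by
        rw [← abs_mul, abs_of_nonneg hsame]
      have h6 : (pP*|a| + pM*|b|)^2 = |pP*a + pM*b|^2 := by
        rw [sq_abs]
        linear_combination 2*pP*pM*habm + pP^2*(sq_abs a) + pM^2*(sq_abs b)
      have h7 : pP*|a| + pM*|b| = |pP*a + pM*b| := by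
        have h8 := congrArg Real.sqrt h6
        rwa [Real.sqrt_sq (by positivity), Real.sqrt_sq (abs_nonneg _)] at h8
      linarith
    · -- opposite signs
      have h7 : pP*|a| - pM*|b| ≤ |pP*a + pM*b| := by
        have := abs_sub_abs_le_abs_sub (pP*a) (-(pM*b))
        rw [sub_neg_eq_add, abs_neg, abs_mul, abs_mul,
          abs_of_nonneg hpP, abs_of_nonneg hpM] at this
        exact this
      have h8 : pM*|b| - pP*|a| ≤ |pP*a + pM*b| := by
        have := abs_sub_abs_le_abs_sub (pM*b) (-(pP*a))
        rw [sub_neg_eq_add, abs_neg, abs_mul, abs_mul,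
          abs_of_nonneg hpP, abs_of_nonneg hpM, add_comm] at this
        linarith [this]
      have habm : |a| * |b| = -(a * b) := by
        rw [← abs_mul, abs_of_neg hopp]
      have h9 : -(a*b) ≤ (1 - t)/2 := by nlinarith [sq_nonneg (a + b)]
      have h10 : pP * pM * (1 - t) ≤ 1/8 := by nlinarith
      have h11 : (pP*|a|) * (pM*|b|) ≤ 1/16 := by
        have : (pP*|a|) * (pM*|b|) = pP * pM * (|a| * |b|) := by ring
        rw [this, habm]
        nlinarith [mul_nonneg hpP hpM]
      rcases le_total (pP*|a|) (pM*|b|) with hle | hle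
      · have hx0 : 0 ≤ pP*|a| := mul_nonneg hpP (abs_nonneg a)
        have : pP*|a| ≤ 1/4 := by nlinarith
        linarith [h8]
      · have hx0 : 0 ≤ pM*|b| := mul_nonneg hpM (abs_nonneg b)
        have : pM*|b| ≤ 1/4 := by nlinarith
        linarith [h7]
  rw [hrho]
  constructor
  · apply mul_nonneg
    · positivity
    · linarith
  · have h12 : (1:ℝ)/(4*Real.pi) = (1/(2*Real.pi)) * (1/2) := by
      field_simp
      ring
    rw [h12]
    apply mul_le_mul_of_nonneg_left key
    positivity
end
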